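/- arXiv:1503.00892 — 2 statements merged into one kernel-verified Lean document; each statement's English description precedes it below -/
import Mathlib

section
/- Suppose that 𝒜 satisfies the dominated splitting condition and Φ satisfies the strong separation condition. Then for every x ∈ Λ, every i ∈ Σ⁺ and every δ > 0, writing j for the unique symbol with x ∈ f_j(Λ) and x' = f_j⁻¹(x), one has μ(B^T_δ(x,i) ∩ f_j(Λ)) = p_j · μ(B^T_{δ/‖A_j|e_s(x')‖}(x', ji)), where ji ∈ Σ⁺ is the concatenation of the symbol j with i, and ‖A|ℓ‖ = |Av| for a unit vector v spanning the line ℓ. -/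
open MeasureTheory Filter Metric Set
open scoped ENNReal Topology NNReal

noncomputable section

/-- The Euclidean plane. -/
abbrev E2 := EuclideanSpace ℝ (Fin 2)

/-- View a vector `Fin 2 → ℝ` as a point of the Euclidean plane. -/
def toE2 (v : Fin 2 → ℝ) : E2 := WithLp.toLp 2 v

/-- The largest singular value `α₁(B)` of a `2×2` real matrix, i.e. the operator norm of the
induced linear map on the Euclidean plane. -/
noncomputable def alpha1 (B : Matrix (Fin 2) (Fin 2) ℝ) : ℝ :=
  ‖LinearMap.toContinuousLinearMap (Matrix.toEuclideanLin B)‖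

/-- The smallest singular value `α₂(B)` of a `2×2` real matrix; for a non-singular `2×2`
matrix one has `α₁(B) * α₂(B) = |det B|`. -/
noncomputable def alpha2 (B : Matrix (Fin 2) (Fin 2) ℝ) : ℝ :=
  |B.det| / alpha1 B

/-- Product `A_{w₁} ⋯ A_{wₙ}` of matrices along a finite word `w`. -/
def listProd {N : ℕ} (A : Fin N → Matrix (Fin 2) (Fin 2) ℝ) (w : List (Fin N)) :
    Matrix (Fin 2) (Fin 2) ℝ :=
  (w.map A).prod

/-- `A_{x₀} A_{x₁} ⋯ A_{x_{n-1}}` along an infinite word `x`. -/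
def prodA {N : ℕ} (A : Fin N → Matrix (Fin 2) (Fin 2) ℝ) (x : ℕ → Fin N) (n : ℕ) :
    Matrix (Fin 2) (Fin 2) ℝ :=
  listProd A ((List.range n).map x)

/-- `A_{x_{n-1}} ⋯ A_{x₁} A_{x₀}` along an infinite word `x` (forward dynamical order). -/
def prodRev {N : ℕ} (A : Fin N → Matrix (Fin 2) (Fin 2) ℝ) (x : ℕ → Fin N) (n : ℕ) :
    Matrix (Fin 2) (Fin 2) ℝ :=
  listProd A (((List.range n).reverse).map x)

/-- The dominated splitting condition: `α₁/α₂ ≥ C e^{δ n}` for all words of length `n`. -/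
def DominatedSplitting {N : ℕ} (A : Fin N → Matrix (Fin 2) (Fin 2) ℝ) : Prop :=
  ∃ C > (0:ℝ), ∃ δ > (0:ℝ), ∀ w : List (Fin N),
    C * Real.exp (δ * w.length) ≤ alpha1 (listProd A w) / alpha2 (listProd A w)

/-- The affine map `x ↦ A_i x + t_i`. -/
def affIFS {N : ℕ} (A : Fin N → Matrix (Fin 2) (Fin 2) ℝ) (t : Fin N → E2)
    (i : Fin N) (x : E2) : E2 :=
  toE2 ((A i).mulVec x) + t i

/-- Composition `f_{w₁} ∘ ⋯ ∘ f_{wₙ}` along a finite word. -/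
def mapWord {N : ℕ} (f : Fin N → E2 → E2) (w : List (Fin N)) : E2 → E2 :=
  w.foldr (fun i g => f i ∘ g) id

/-- The strong separation condition for an IFS on the plane. -/
def SSC {N : ℕ} (f : Fin N → E2 → E2) : Prop :=
  ∃ O : Set E2, IsOpen O ∧ O.Nonempty ∧ Bornology.IsBounded O ∧
    (∀ i, f i '' closure O ⊆ O) ∧
    Pairwise fun i j => Disjoint (f i '' closure O) (f j '' closure O)

/-- `Λ` is the attractor of the IFS `f`: the (unique) nonempty compact set with
`Λ = ⋃ i f_i(Λ)`. -/
def IsAttractor {N : ℕ} (f : Fin N → E2 → E2) (Λ : Set E2) : Prop :=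
  IsCompact Λ ∧ Λ.Nonempty ∧ Λ = ⋃ i, f i '' Λ

/-- The natural projection `π₊(i) = ∑ₙ A_{i₀}⋯A_{i_{n-1}} t_{iₙ} = lim f_{i₀}∘⋯∘f_{iₙ}(0)`. -/
noncomputable def piPlus {N : ℕ} (A : Fin N → Matrix (Fin 2) (Fin 2) ℝ)
    (t : Fin N → E2) (x : ℕ → Fin N) : E2 :=
  ∑' n, toE2 ((prodA A x n).mulVec (t (x n)))

/-- `ν` is the Bernoulli product measure with marginal `p` on `Σ⁺ = {1,…,N}^ℕ`,
characterized by its values on cylinder sets. -/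
def IsBernoulli {N : ℕ} (p : Fin N → ℝ) (ν : Measure (ℕ → Fin N)) : Prop :=
  ∀ (n : ℕ) (w : Fin n → Fin N),
    ν {x | ∀ k : Fin n, x k.val = w k} = ∏ k, ENNReal.ofReal (p (w k))

/-- The entropy `h_ν = -∑ p_i log p_i` of the Bernoulli measure with marginal `p`. -/
noncomputable def entropy {N : ℕ} (p : Fin N → ℝ) : ℝ := -∑ i, p i * Real.log (p i)

/-- The Hausdorff dimension of a measure: `dim_H m = inf { dim_H s : m(sᶜ) = 0 }`. -/
noncomputable def mdimH {X : Type*} [EMetricSpace X] {mX : MeasurableSpace X}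
    (m : Measure X) : ℝ≥0∞ :=
  ⨅ (s : Set X) (_ : m sᶜ = 0), dimH s

/-- A measure is exact dimensional with dimension `d` if the local dimension
`lim_{r→0⁺} log m(B_r(x)) / log r` exists and equals `d` at `m`-a.e. point. -/
def IsExactDimensional {X : Type*} [PseudoMetricSpace X] {mX : MeasurableSpace X}
    (m : Measure X) (d : ℝ) : Prop :=
  ∀ᵐ z ∂m, Tendsto (fun r : ℝ => Real.log (m (Metric.ball z r)).toReal / Real.log r)
    (𝓝[>] (0:ℝ)) (𝓝 d)

/-- `χs ≤ χss` are the Lyapunov exponents of `(A, ν)`: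
`(1/n) log α₁(A_{x₀}⋯A_{x_{n-1}}) → -χs` and `(1/n) log α₂(A_{x₀}⋯A_{x_{n-1}}) → -χss`
for `ν`-a.e. `x`. -/
def LyapunovExponents {N : ℕ} (A : Fin N → Matrix (Fin 2) (Fin 2) ℝ)
    (ν : Measure (ℕ → Fin N)) (χs χss : ℝ) : Prop :=
  0 < χs ∧ χs ≤ χss ∧
  (∀ᵐ x ∂ν, Tendsto (fun n : ℕ => Real.log (alpha1 (prodA A x n)) / n) atTop (𝓝 (-χs))) ∧
  (∀ᵐ x ∂ν, Tendsto (fun n : ℕ => Real.log (alpha2 (prodA A x n)) / n) atTop (𝓝 (-χss)))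

/-- The Lyapunov dimension `min {2, h/χs, 1 + (h - χs)/χss}`. -/
noncomputable def dimLyap {N : ℕ} (p : Fin N → ℝ) (χs χss : ℝ) : ℝ :=
  min 2 (min (entropy p / χs) (1 + (entropy p - χs) / χss))

/-- Left shift on `Σ⁺`. -/
def shift {N : ℕ} (x : ℕ → Fin N) : ℕ → Fin N := fun n => x (n + 1)

/-- `ess` is the family of strong-stable directions of `A`: a family of lines,
equivariant (`A_{x₀} e_ss(x) = e_ss(σx)`), along which the products `A_{x_{n-1}}⋯A_{x₀}`
contract at a rate exponentially faster than `α₁`; this characterizes the strong-stable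
directions `e_ss(x) = ⋂ₙ A_{x₀}⁻¹⋯A_{x_{n-1}}⁻¹(cl Mᶜ)` obtained from a forward-invariant
multicone `M` under the dominated splitting condition. -/
def IsStrongStableDirections {N : ℕ} (A : Fin N → Matrix (Fin 2) (Fin 2) ℝ)
    (ess : (ℕ → Fin N) → Submodule ℝ E2) : Prop :=
  (∀ x, Module.finrank ℝ (ess x) = 1) ∧
  (∀ x, Submodule.map (Matrix.toEuclideanLin (A (x 0))) (ess x) = ess (shift x)) ∧
  ∃ C > (0:ℝ), ∃ δ > (0:ℝ), ∀ (x : ℕ → Fin N) (n : ℕ), ∀ v ∈ ess x,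
    ‖toE2 ((prodRev A x n).mulVec v)‖ ≤ C * Real.exp (-δ * n) * alpha1 (prodRev A x n) * ‖v‖

/-- Orthogonal projection of the plane onto the line through the origin
perpendicular to the line `ℓ`. -/
noncomputable def projPerp (ℓ : Submodule ℝ E2) (v : E2) : E2 :=
  (ℓᗮ.orthogonalProjectionOnto v : E2)

/-- The unit vector with angle `θ`. -/
noncomputable def dirVec (θ : ℝ) : E2 := toE2 ![Real.cos θ, Real.sin θ]

/-- The line through the origin with angle `θ`;
angles in `[0,π)` parametrize the projective space `P¹`. -/
noncomputable def lineOf (θ : ℝ) : Submodule ℝ E2 := Submodule.span ℝ {dirVec θ}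

/-- The standard positive cone `{(x,y) ≠ 0 : xy ≥ 0}`. -/
def StdPosCone : Set E2 := {v | v ≠ 0 ∧ 0 ≤ v 0 * v 1}

/-- A multicone: a finite disjoint union of cones (images of the standard positive cone
under linear isomorphisms). -/
def IsMulticone (M : Set E2) : Prop :=
  ∃ (k : ℕ) (T : Fin k → E2 ≃ₗ[ℝ] E2),
    M = (⋃ j, T j '' StdPosCone) ∧
    Pairwise fun j j' => Disjoint (T j '' StdPosCone) ((T j') '' StdPosCone)

/-- The backward non-overlapping condition: the inverse matrices map the interior of some
multicone `M` into itself with pairwise disjoint images. -/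
def BackwardNonOverlapping {N : ℕ} (A : Fin N → Matrix (Fin 2) (Fin 2) ℝ) : Prop :=
  ∃ M : Set E2, IsMulticone M ∧
    (∀ i, (fun (v : E2) => toE2 ((A i)⁻¹.mulVec v)) '' interior M ⊆ interior M) ∧
    Pairwise fun i j => Disjoint ((fun (v : E2) => toE2 ((A i)⁻¹.mulVec v)) '' interior M)
      ((fun (v : E2) => toE2 ((A j)⁻¹.mulVec v)) '' interior M)

/-- `es` is the family of stable directions on the attractor `Λ`: a family of lines,
equivariant (`e_s(f_j x) = A_j e_s(x)`), along which products of the matrices contract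
no faster (up to a constant) than `α₁`; this characterizes the stable directions
`e_s(x) = ⋂ₙ A_{i₋₁}⋯A_{i₋ₙ}(M)` given by the backward coding of `x ∈ Λ`. -/
def IsStableDirections {N : ℕ} (A : Fin N → Matrix (Fin 2) (Fin 2) ℝ)
    (f : Fin N → E2 → E2) (Λ : Set E2) (es : E2 → Submodule ℝ E2) : Prop :=
  (∀ x ∈ Λ, Module.finrank ℝ (es x) = 1) ∧
  (∀ j, ∀ x ∈ Λ, Submodule.map (Matrix.toEuclideanLin (A j)) (es x) = es (f j x)) ∧
  ∃ c > (0:ℝ), ∀ x ∈ Λ, ∀ w : List (Fin N), ∀ v ∈ es x,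
    c * alpha1 (listProd A w) * ‖v‖ ≤ ‖toE2 ((listProd A w).mulVec v)‖

/-- The norm `‖B|ℓ‖ = |Bv|` of a matrix restricted to a line `ℓ` (`v` a unit vector
spanning `ℓ`). -/
noncomputable def normOnLine (B : Matrix (Fin 2) (Fin 2) ℝ) (ℓ : Submodule ℝ E2) : ℝ :=
  sSup {r : ℝ | ∃ v ∈ ℓ, ‖v‖ = 1 ∧ r = ‖toE2 (B.mulVec v)‖}

/-- The modified transversal ball `B^T_δ(x,i)`: the set of `z ∈ Λ` such that the
intersection points of the lines `l_ss(x,i) = x + e_ss(i)` and `l_ss(z,i) = z + e_ss(i)`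
with the line `e_s(x)` through the origin are at distance at most `δ`. -/
def transBall {N : ℕ} (Λ : Set E2) (ess : (ℕ → Fin N) → Submodule ℝ E2)
    (es : E2 → Submodule ℝ E2) (δ : ℝ) (x : E2) (i : ℕ → Fin N) : Set E2 :=
  {z | z ∈ Λ ∧ ∃ w₁ w₂ : E2, w₁ ∈ es x ∧ w₂ ∈ es x ∧
    w₁ - x ∈ ess i ∧ w₂ - z ∈ ess i ∧ ‖w₁ - w₂‖ ≤ δ}

/-- Prepend a symbol to an infinite word. -/
def consW {N : ℕ} (j : Fin N) (i : ℕ → Fin N) : ℕ → Fin N :=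
  fun n => match n with
  | 0 => j
  | Nat.succ k => i k

-- Part 1
noncomputable def Lm (M : Matrix (Fin 2) (Fin 2) ℝ) : E2 →L[ℝ] E2 :=
  LinearMap.toContinuousLinearMap (Matrix.toEuclideanLin M)

lemma Lm_apply (M : Matrix (Fin 2) (Fin 2) ℝ) (v : E2) : Lm M v = toE2 (M.mulVec v) := rfl

lemma alpha1_eq (M : Matrix (Fin 2) (Fin 2) ℝ) : alpha1 M = ‖Lm M‖ := rfl

lemma norm_mulVec_le (M : Matrix (Fin 2) (Fin 2) ℝ) (v : E2) :
    ‖toE2 (M.mulVec v)‖ ≤ alpha1 M * ‖v‖ := (Lm M).le_opNorm v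

lemma alpha1_nonneg (M : Matrix (Fin 2) (Fin 2) ℝ) : 0 ≤ alpha1 M := norm_nonneg _

lemma Lm_mul (M N : Matrix (Fin 2) (Fin 2) ℝ) : Lm (M * N) = (Lm M).comp (Lm N) := by
  refine ContinuousLinearMap.ext fun v => ?_
  show toE2 ((M * N).mulVec v) = toE2 (M.mulVec (N.mulVec v))
  rw [Matrix.mulVec_mulVec]

lemma Lm_one : Lm 1 = ContinuousLinearMap.id ℝ E2 := by
  refine ContinuousLinearMap.ext fun v => ?_
  show toE2 ((1 : Matrix (Fin 2) (Fin 2) ℝ).mulVec v) = v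
  rw [Matrix.one_mulVec]; rfl

lemma alpha1_one : alpha1 1 = 1 := by
  rw [alpha1_eq, Lm_one]; exact ContinuousLinearMap.norm_id

lemma alpha1_mul_le (M N : Matrix (Fin 2) (Fin 2) ℝ) :
    alpha1 (M * N) ≤ alpha1 M * alpha1 N := by
  rw [alpha1_eq, alpha1_eq M, alpha1_eq N, Lm_mul]
  exact ContinuousLinearMap.opNorm_comp_le _ _

lemma listProd_cons {N : ℕ} (A : Fin N → Matrix (Fin 2) (Fin 2) ℝ) (i : Fin N)
    (l : List (Fin N)) : listProd A (i :: l) = A i * listProd A l := by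
  simp [listProd]

lemma alpha1_listProd_le {N : ℕ} (A : Fin N → Matrix (Fin 2) (Fin 2) ℝ) {a : ℝ}
    (ha : ∀ i, alpha1 (A i) ≤ a) (ha0 : 0 ≤ a) (w : List (Fin N)) :
    alpha1 (listProd A w) ≤ a ^ w.length := by
  induction w with
  | nil => simp [listProd, alpha1_one]
  | cons i l ih =>
      rw [listProd_cons]
      calc alpha1 (A i * listProd A l) ≤ alpha1 (A i) * alpha1 (listProd A l) :=
            alpha1_mul_le _ _
        _ ≤ a * a ^ l.length :=
            mul_le_mul (ha i) ih (alpha1_nonneg _) ha0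
        _ = a ^ (i :: l).length := by rw [List.length_cons, pow_succ']

lemma mulVec_ne_zero {M : Matrix (Fin 2) (Fin 2) ℝ} (hdet : M.det ≠ 0) {v : Fin 2 → ℝ}
    (hv : v ≠ 0) : M.mulVec v ≠ 0 := by
  intro h
  apply hv
  have h1 : (M⁻¹ * M).mulVec v = M⁻¹.mulVec (M.mulVec v) := (Matrix.mulVec_mulVec _ _ _).symm
  rw [Matrix.nonsing_inv_mul M (Ne.isUnit hdet), Matrix.one_mulVec, h, Matrix.mulVec_zero] at h1
  exact h1

lemma alpha1_pos {M : Matrix (Fin 2) (Fin 2) ℝ} (hdet : M.det ≠ 0) : 0 < alpha1 M := by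
  have hv : (EuclideanSpace.single (0 : Fin 2) (1:ℝ) : Fin 2 → ℝ) ≠ 0 := by
    intro h
    have := congrFun h 0
    simp [EuclideanSpace.single] at this
  have h1 : toE2 (M.mulVec (EuclideanSpace.single (0 : Fin 2) (1:ℝ))) ≠ 0 :=
    fun h => mulVec_ne_zero hdet hv (by simpa [toE2] using congrArg WithLp.ofLp h)
  have h2 : 0 < ‖toE2 (M.mulVec (EuclideanSpace.single (0 : Fin 2) (1:ℝ)))‖ :=
    norm_pos_iff.mpr h1
  have h3 := norm_mulVec_le M (EuclideanSpace.single (0 : Fin 2) (1:ℝ))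
  have h4 : ‖(EuclideanSpace.single (0 : Fin 2) (1:ℝ) : E2)‖ = 1 := by
    simp
  rw [h4, mul_one] at h3
  linarith

lemma det_listProd_ne_zero {N : ℕ} {A : Fin N → Matrix (Fin 2) (Fin 2) ℝ}
    (hA : ∀ i, (A i).det ≠ 0) (w : List (Fin N)) : (listProd A w).det ≠ 0 := by
  induction w with
  | nil => simp [listProd]
  | cons i l ih =>
      rw [listProd_cons, Matrix.det_mul]
      exact mul_ne_zero (hA i) ih

lemma prodA_zero {N : ℕ} (A : Fin N → Matrix (Fin 2) (Fin 2) ℝ) (x : ℕ → Fin N) :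
    prodA A x 0 = 1 := by simp [prodA, listProd]

lemma prodA_succ {N : ℕ} (A : Fin N → Matrix (Fin 2) (Fin 2) ℝ) (x : ℕ → Fin N) (n : ℕ) :
    prodA A x (n + 1) = A (x 0) * prodA A (shift x) n := by
  have h : (List.range (n+1)).map x = x 0 :: (List.range n).map (shift x) := by
    rw [List.range_succ_eq_map, List.map_cons, List.map_map]
    rfl
  rw [prodA, h, listProd_cons]
  rfl

lemma alpha1_prodA_le {N : ℕ} (A : Fin N → Matrix (Fin 2) (Fin 2) ℝ) {a : ℝ}
    (ha : ∀ i, alpha1 (A i) ≤ a) (ha0 : 0 ≤ a) (x : ℕ → Fin N) (n : ℕ) :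
    alpha1 (prodA A x n) ≤ a ^ n := by
  have := alpha1_listProd_le A ha ha0 ((List.range n).map x)
  simpa [prodA] using this

-- Part 2
section Part2
variable {N : ℕ} {A : Fin N → Matrix (Fin 2) (Fin 2) ℝ} {t : Fin N → E2} {a Tb : ℝ}

/-- term of the series defining `piPlus`. -/
noncomputable def trm (A : Fin N → Matrix (Fin 2) (Fin 2) ℝ) (t : Fin N → E2)
    (x : ℕ → Fin N) (n : ℕ) : E2 := toE2 ((prodA A x n).mulVec (t (x n)))

lemma norm_trm_le (ha : ∀ i, alpha1 (A i) ≤ a) (ha0 : 0 ≤ a)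
    (htb : ∀ i, ‖t i‖ ≤ Tb) (x : ℕ → Fin N) (n : ℕ) :
    ‖trm A t x n‖ ≤ a ^ n * Tb := by
  calc ‖trm A t x n‖ ≤ alpha1 (prodA A x n) * ‖t (x n)‖ := norm_mulVec_le _ _
    _ ≤ a ^ n * Tb :=
        mul_le_mul (alpha1_prodA_le A ha ha0 x n) (htb (x n)) (norm_nonneg _)
          (pow_nonneg ha0 n)

lemma summable_trm (ha : ∀ i, alpha1 (A i) ≤ a) (ha0 : 0 ≤ a) (ha1 : a < 1)
    (htb : ∀ i, ‖t i‖ ≤ Tb) (x : ℕ → Fin N) : Summable (trm A t x) :=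
  Summable.of_norm_bounded ((summable_geometric_of_lt_one ha0 ha1).mul_right Tb)
    (norm_trm_le ha ha0 htb x)

lemma piPlus_eq_tsum_trm (x : ℕ → Fin N) : piPlus A t x = ∑' n, trm A t x n := rfl

lemma trm_zero (x : ℕ → Fin N) : trm A t x 0 = t (x 0) := by
  unfold trm
  rw [prodA_zero, Matrix.one_mulVec]
  rfl

lemma trm_succ (x : ℕ → Fin N) (n : ℕ) :
    trm A t x (n + 1) = Lm (A (x 0)) (trm A t (shift x) n) := by
  unfold trm
  rw [Lm_apply, prodA_succ]
  show toE2 ((A (x 0) * prodA A (shift x) n).mulVec (t (x (n+1)))) = _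
  rw [← Matrix.mulVec_mulVec]
  rfl

lemma piPlus_shift (ha : ∀ i, alpha1 (A i) ≤ a) (ha0 : 0 ≤ a) (ha1 : a < 1)
    (htb : ∀ i, ‖t i‖ ≤ Tb) (x : ℕ → Fin N) :
    piPlus A t x = affIFS A t (x 0) (piPlus A t (shift x)) := by
  have hs := summable_trm ha ha0 ha1 htb x
  have hs' := summable_trm ha ha0 ha1 htb (shift x)
  rw [piPlus_eq_tsum_trm, hs.tsum_eq_zero_add, trm_zero]
  have : ∑' n, trm A t x (n + 1) = Lm (A (x 0)) (∑' n, trm A t (shift x) n) := by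
    rw [(Lm (A (x 0))).map_tsum hs']
    exact tsum_congr fun n => trm_succ x n
  rw [this]
  show t (x 0) + Lm (A (x 0)) (piPlus A t (shift x)) = _
  rw [affIFS, ← Lm_apply, add_comm]

lemma shift_consW {N : ℕ} (j : Fin N) (i : ℕ → Fin N) : shift (consW j i) = i := rfl

lemma mapWord_range (ha : ∀ i, alpha1 (A i) ≤ a) (y : E2) (n : ℕ) :
    ∀ x : ℕ → Fin N, mapWord (affIFS A t) ((List.range n).map x) y
      = (∑ k ∈ Finset.range n, trm A t x k) + toE2 ((prodA A x n).mulVec y) := by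
  induction n with
  | zero =>
      intro x
      simp [mapWord, prodA_zero, Matrix.one_mulVec]
      rfl
  | succ n ih =>
      intro x
      have hw : (List.range (n+1)).map x = x 0 :: (List.range n).map (shift x) := by
        rw [List.range_succ_eq_map, List.map_cons, List.map_map]; rfl
      rw [hw]
      show affIFS A t (x 0) (mapWord (affIFS A t) ((List.range n).map (shift x)) y) = _
      rw [ih (shift x)]
      show Lm (A (x 0)) ((∑ k ∈ Finset.range n, trm A t (shift x) k)
        + toE2 ((prodA A (shift x) n).mulVec y)) + t (x 0) = _
      rw [map_add, map_sum]
      have h1 : ∀ k, Lm (A (x 0)) (trm A t (shift x) k) = trm A t x (k + 1) :=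
        fun k => (trm_succ x k).symm
      have h2 : Lm (A (x 0)) (toE2 ((prodA A (shift x) n).mulVec y))
          = toE2 ((prodA A x (n+1)).mulVec y) := by
        rw [Lm_apply, prodA_succ, ← Matrix.mulVec_mulVec]
        rfl
      rw [Finset.sum_congr rfl (fun k _ => h1 k), h2]
      rw [Finset.sum_range_succ' (trm A t x) n, trm_zero]
      abel

lemma piPlus_mem_of_closed (ha : ∀ i, alpha1 (A i) ≤ a) (ha0 : 0 ≤ a) (ha1 : a < 1)
    (htb : ∀ i, ‖t i‖ ≤ Tb) {K : Set E2} (hK : IsClosed K) {y : E2} (hy : y ∈ K)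
    (hinv : ∀ i, ∀ z ∈ K, affIFS A t i z ∈ K) (x : ℕ → Fin N) :
    piPlus A t x ∈ K := by
  have hs := summable_trm ha ha0 ha1 htb x
  have hmem : ∀ n, ∀ x : ℕ → Fin N, mapWord (affIFS A t) ((List.range n).map x) y ∈ K := by
    intro n
    induction n with
    | zero => intro x; exact hy
    | succ n ih =>
        intro x
        have hw : (List.range (n+1)).map x = x 0 :: (List.range n).map (shift x) := by
          rw [List.range_succ_eq_map, List.map_cons, List.map_map]; rfl
        rw [hw]
        exact hinv (x 0) _ (ih (shift x))
  have htend : Tendsto (fun n => mapWord (affIFS A t) ((List.range n).map x) y) atTop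
      (𝓝 (piPlus A t x)) := by
    have h1 : Tendsto (fun n => ∑ k ∈ Finset.range n, trm A t x k) atTop
        (𝓝 (piPlus A t x)) := hs.hasSum.tendsto_sum_nat
    have h2 : Tendsto (fun n => toE2 ((prodA A x n).mulVec y)) atTop (𝓝 0) := by
      have hpow := (tendsto_pow_atTop_nhds_zero_of_lt_one ha0 ha1).mul_const ‖y‖
      rw [zero_mul] at hpow
      apply squeeze_zero_norm (fun n => ?_) hpow
      calc ‖toE2 ((prodA A x n).mulVec y)‖ ≤ alpha1 (prodA A x n) * ‖y‖ := norm_mulVec_le _ _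
        _ ≤ a ^ n * ‖y‖ :=
            mul_le_mul_of_nonneg_right (alpha1_prodA_le A ha ha0 x n) (norm_nonneg _)
    have := h1.add h2
    rw [add_zero] at this
    refine this.congr fun n => (mapWord_range ha y n x).symm
  exact hK.mem_of_tendsto htend (Filter.Eventually.of_forall fun n => hmem n x)

lemma trm_congr (x y : ℕ → Fin N) (k : ℕ) (h : ∀ m ≤ k, x m = y m) :
    trm A t x k = trm A t y k := by
  unfold trm prodA
  have h1 : (List.range k).map x = (List.range k).map y := by
    apply List.map_congr_left
    intro m hm
    exact h m (le_of_lt (List.mem_range.mp hm))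
  rw [h1, h k le_rfl]

instance msc_pi_fin (n : ℕ) : MeasurableSingletonClass (Fin n → Fin N) := by
  constructor
  intro w
  have : ({w} : Set (Fin n → Fin N)) = ⋂ m, (fun y : Fin n → Fin N => y m) ⁻¹' {w m} := by
    ext y
    simp [funext_iff]
  rw [this]
  exact MeasurableSet.iInter fun m => measurable_pi_apply m (measurableSet_singleton _)

lemma trm_measurable (k : ℕ) : Measurable fun x : ℕ → Fin N => trm A t x k := by
  classical
  by_cases hN : N = 0
  · subst hN
    have : IsEmpty (ℕ → Fin 0) := ⟨fun x => (x 0).elim0⟩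
    exact measurable_of_empty _
  have hNpos : 0 < N := Nat.pos_of_ne_zero hN
  set e : (Fin (k+1) → Fin N) → (ℕ → Fin N) := fun w m =>
    if h : m < k + 1 then w ⟨m, h⟩ else w ⟨0, Nat.succ_pos k⟩ with he
  set r : (ℕ → Fin N) → (Fin (k+1) → Fin N) := fun x m => x m.val with hr
  have hfac : (fun x : ℕ → Fin N => trm A t x k)
      = (fun w : Fin (k+1) → Fin N => trm A t (e w) k) ∘ r := by
    funext x
    show trm A t x k = trm A t (e (r x)) k
    apply trm_congr
    intro m hm
    simp only [he, hr]
    rw [dif_pos (Nat.lt_succ_of_le hm)]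
  rw [hfac]
  exact (measurable_of_countable _).comp
    (measurable_pi_lambda _ fun m => measurable_pi_apply m.val)

lemma piPlus_measurable (ha : ∀ i, alpha1 (A i) ≤ a) (ha0 : 0 ≤ a) (ha1 : a < 1)
    (htb : ∀ i, ‖t i‖ ≤ Tb) : Measurable (piPlus A t) := by
  have hmeas : ∀ n : ℕ, Measurable fun x : ℕ → Fin N =>
      ∑ k ∈ Finset.range n, trm A t x k :=
    fun n => Finset.measurable_sum _ fun k _ => trm_measurable k
  apply measurable_of_tendsto_metrizable hmeas
  rw [tendsto_pi_nhds]
  intro x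
  exact (summable_trm ha ha0 ha1 htb x).hasSum.tendsto_sum_nat

end Part2

-- Part 3
section Part3
variable {N : ℕ}

def cylSet (n : ℕ) (w : Fin n → Fin N) : Set (ℕ → Fin N) := {x | ∀ k : Fin n, x k.val = w k}

def Cyl (N : ℕ) : Set (Set (ℕ → Fin N)) :=
  {S | ∃ (n : ℕ) (w : Fin n → Fin N), S = cylSet n w}

lemma cylSet_measurable (n : ℕ) (w : Fin n → Fin N) : MeasurableSet (cylSet n w) := by
  have : cylSet n w = ⋂ k : Fin n, (fun x : ℕ → Fin N => x k.val) ⁻¹' {w k} := by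
    ext x; simp [cylSet]
  rw [this]
  exact MeasurableSet.iInter fun k => measurable_pi_apply k.val (measurableSet_singleton _)

lemma cyl_inter_of_le {n m : ℕ} (hnm : n ≤ m) (w : Fin n → Fin N) (v : Fin m → Fin N)
    (hne : (cylSet n w ∩ cylSet m v).Nonempty) :
    cylSet n w ∩ cylSet m v = cylSet m v := by
  obtain ⟨x, hxw, hxv⟩ := hne
  apply Set.inter_eq_self_of_subset_right
  intro y hy
  intro k
  have hk : (k : ℕ) < m := lt_of_lt_of_le k.isLt hnm
  have h1 : y k.val = v ⟨k.val, hk⟩ := hy ⟨k.val, hk⟩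
  have h2 : x k.val = v ⟨k.val, hk⟩ := hxv ⟨k.val, hk⟩
  have h3 : x k.val = w k := hxw k
  rw [h1, ← h2, h3]

lemma isPiSystem_cyl : IsPiSystem (Cyl N) := by
  rintro S ⟨n, w, rfl⟩ T ⟨m, v, rfl⟩ hne
  rcases le_total n m with h | h
  · rw [cyl_inter_of_le h w v hne]
    exact ⟨m, v, rfl⟩
  · rw [Set.inter_comm] at hne ⊢
    rw [cyl_inter_of_le h v w hne]
    exact ⟨n, w, rfl⟩

lemma generateFrom_cyl :
    (inferInstance : MeasurableSpace (ℕ → Fin N)) = MeasurableSpace.generateFrom (Cyl N) := by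
  apply le_antisymm
  · -- pi ≤ generateFrom
    have hev0 : ∀ (k : ℕ) (a : Fin N), MeasurableSet[MeasurableSpace.generateFrom (Cyl N)]
        ((fun x : ℕ → Fin N => x k) ⁻¹' {a}) := by
      intro k a
      have : (fun x : ℕ → Fin N => x k) ⁻¹' {a}
          = ⋃ (w : Fin (k+1) → Fin N) (_ : w (Fin.last k) = a), cylSet (k+1) w := by
        ext x
        simp only [Set.mem_preimage, Set.mem_singleton_iff, Set.mem_iUnion]
        constructor
        · intro hx
          refine ⟨fun m => x m.val, by simpa using hx, fun m => rfl⟩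
        · rintro ⟨w, hw, hxw⟩
          have := hxw (Fin.last k)
          simpa [hw] using this
      rw [this]
      refine MeasurableSet.iUnion fun w => MeasurableSet.iUnion fun _ =>
        MeasurableSpace.measurableSet_generateFrom ⟨k+1, w, rfl⟩
    have hev : ∀ k : ℕ, @Measurable _ _ (MeasurableSpace.generateFrom (Cyl N)) _
        (fun x : ℕ → Fin N => x k) := by
      intro k s _
      have : (fun x : ℕ → Fin N => x k) ⁻¹' s
          = ⋃ a ∈ s, (fun x : ℕ → Fin N => x k) ⁻¹' {a} := by
        ext x; simp
      rw [this]
      exact MeasurableSet.biUnion (Set.to_countable s) fun a _ => hev0 k a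
    intro s hs
    have : @Measurable _ _ (MeasurableSpace.generateFrom (Cyl N)) _ (id : (ℕ → Fin N) → (ℕ → Fin N)) := by
      rw [@measurable_pi_iff _ _ _ (MeasurableSpace.generateFrom (Cyl N))]
      exact hev
    exact this hs
  · apply MeasurableSpace.generateFrom_le
    rintro S ⟨n, w, rfl⟩
    exact cylSet_measurable n w

lemma bernoulli_shift {p : Fin N → ℝ} {ν : Measure (ℕ → Fin N)}
    (hνP : IsProbabilityMeasure ν) (hber : IsBernoulli p ν) (j : Fin N)
    {E : Set (ℕ → Fin N)} (hE : MeasurableSet E) :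
    ν (shift ⁻¹' E ∩ {x | x 0 = j}) = ENNReal.ofReal (p j) * ν E := by
  have hshift : Measurable (shift : (ℕ → Fin N) → (ℕ → Fin N)) :=
    measurable_pi_lambda _ fun n => measurable_pi_apply (n+1)
  have hj : MeasurableSet {x : ℕ → Fin N | x 0 = j} := by
    have : {x : ℕ → Fin N | x 0 = j} = (fun x : ℕ → Fin N => x 0) ⁻¹' {j} := rfl
    rw [this]
    exact measurable_pi_apply 0 (measurableSet_singleton _)
  set μ1 : Measure (ℕ → Fin N) := (ν.restrict {x | x 0 = j}).map shift with hμ1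
  set μ2 : Measure (ℕ → Fin N) := (ENNReal.ofReal (p j)) • ν with hμ2
  have hμ1_apply : ∀ (F : Set (ℕ → Fin N)), MeasurableSet F →
      μ1 F = ν (shift ⁻¹' F ∩ {x | x 0 = j}) := by
    intro F hF
    rw [hμ1, Measure.map_apply hshift hF, Measure.restrict_apply (hshift hF)]
  have hcyl_val : ∀ (n : ℕ) (w : Fin n → Fin N),
      shift ⁻¹' cylSet n w ∩ {x | x 0 = j} = cylSet (n+1) (Fin.cons j w) := by
    intro n w
    ext x
    simp only [Set.mem_inter_iff, Set.mem_preimage, cylSet, Set.mem_setOf_eq]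
    constructor
    · rintro ⟨h1, h2⟩ k
      refine Fin.cases ?_ (fun m => ?_) k
      · simpa using h2
      · have := h1 m
        simpa [Fin.cons_succ, shift] using this
    · intro h
      constructor
      · intro k
        have := h k.succ
        simpa [Fin.cons_succ, shift] using this
      · simpa using h 0
  have hfin : IsFiniteMeasure μ1 := by
    constructor
    rw [hμ1_apply Set.univ MeasurableSet.univ]
    exact lt_of_le_of_lt (measure_mono (Set.subset_univ _)) (measure_lt_top ν _)
  have key : μ1 = μ2 := by
    refine ext_of_generate_finite (Cyl N) generateFrom_cyl isPiSystem_cyl ?_ ?_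
    · rintro S ⟨n, w, rfl⟩
      rw [hμ1_apply _ (cylSet_measurable n w), hcyl_val n w]
      have h1 : ν (cylSet (n+1) ((Fin.cons j w : Fin (n+1) → Fin N)))
          = ∏ k : Fin (n+1), ENNReal.ofReal (p ((Fin.cons j w : Fin (n+1) → Fin N) k)) := hber (n+1) (Fin.cons j w)
      have h2 : ν (cylSet n w) = ∏ k : Fin n, ENNReal.ofReal (p (w k)) := hber n w
      rw [h1, hμ2, Measure.smul_apply, smul_eq_mul, h2, Fin.prod_univ_succ]
      simp
    · have huniv : (Set.univ : Set (ℕ → Fin N)) = cylSet 0 (Fin.elim0) := by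
        ext x; simp [cylSet]
      rw [hμ1_apply _ MeasurableSet.univ, hμ2, Measure.smul_apply, smul_eq_mul,
        measure_univ, mul_one, huniv, hcyl_val 0 Fin.elim0]
      have h1 : ν (cylSet 1 ((Fin.cons j Fin.elim0 : Fin 1 → Fin N)))
          = ∏ k : Fin 1, ENNReal.ofReal (p ((Fin.cons j Fin.elim0 : Fin 1 → Fin N) k)) :=
        hber 1 (Fin.cons j Fin.elim0)
      rw [h1]
      simp
  have := congrArg (fun m : Measure (ℕ → Fin N) => m E) key
  rw [hμ1_apply E hE] at this
  rw [this, hμ2, Measure.smul_apply, smul_eq_mul]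

end Part3

-- Part 4
section Part4

variable {p q : Submodule ℝ E2}

lemma isCompl_of_rank_one (hp : Module.finrank ℝ p = 1) (hq : Module.finrank ℝ q = 1)
    (hpq : p ⊓ q = ⊥) : IsCompl p q := by
  constructor
  · exact disjoint_iff.mpr hpq
  · rw [codisjoint_iff]
    apply Submodule.eq_top_of_finrank_eq
    have h1 := Submodule.finrank_sup_add_finrank_inf_eq p q
    rw [hpq, hp, hq] at h1
    simp only [finrank_bot] at h1
    rw [finrank_euclideanSpace_fin]
    omega

noncomputable def projL (h : IsCompl p q) : E2 →ₗ[ℝ] E2 :=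
  p.subtype.comp (p.projectionOnto q h)

lemma projL_mem (h : IsCompl p q) (z : E2) : projL h z ∈ p := SetLike.coe_mem _

lemma sub_projL_mem (h : IsCompl p q) (z : E2) : z - projL h z ∈ q := by
  have hz : z ∈ p ⊔ q := by rw [h.codisjoint.eq_top]; trivial
  obtain ⟨a, ha, b, hb, hab⟩ := Submodule.mem_sup.mp hz
  have hproj : projL h z = a := by
    have : projL h z = projL h a + projL h b := by rw [← map_add, hab]
    rw [this]
    have h1 : projL h a = a := by
      show (p.subtype (p.projectionOnto q h ↑(⟨a, ha⟩ : p))) = a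
      rw [Submodule.projectionOnto_apply_left h ⟨a, ha⟩]
      rfl
    have h2 : projL h b = 0 := by
      show (p.subtype (p.projectionOnto q h ↑(⟨b, hb⟩ : q))) = 0
      rw [Submodule.projectionOnto_apply_right h ⟨b, hb⟩]
      rfl
    rw [h1, h2, add_zero]
  rw [hproj, ← hab]
  simpa using hb

lemma projL_unique (h : IsCompl p q) {z u : E2} (hu : u ∈ p) (huz : z - u ∈ q) :
    u = projL h z := by
  have h1 : u - projL h z ∈ q := by
    have := Submodule.sub_mem q (sub_projL_mem h z) huz
    simpa using this
  have h2 : u - projL h z ∈ p := Submodule.sub_mem p hu (projL_mem h z)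
  have h3 : u - projL h z = 0 := by
    have := h.disjoint
    rw [Submodule.disjoint_def] at this
    exact this _ h2 h1
  exact sub_eq_zero.mp h3

lemma projL_continuous (h : IsCompl p q) : Continuous (projL h) :=
  (projL h).continuous_of_finiteDimensional

lemma es_ess_transversal {N : ℕ} {A : Fin N → Matrix (Fin 2) (Fin 2) ℝ}
    (hA : ∀ i, (A i).det ≠ 0) {f : Fin N → E2 → E2} {Λ : Set E2}
    {ess : (ℕ → Fin N) → Submodule ℝ E2} {es : E2 → Submodule ℝ E2}
    (hess : IsStrongStableDirections A ess) (hes : IsStableDirections A f Λ es)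
    {x : E2} (hx : x ∈ Λ) (i : ℕ → Fin N) : IsCompl (es x) (ess i) := by
  obtain ⟨hess1, _, C, hC, δ, hδ, hcontr⟩ := hess
  obtain ⟨hes1, _, c, hc, hlow⟩ := hes
  apply isCompl_of_rank_one (hes1 x hx) (hess1 i)
  rw [Submodule.eq_bot_iff]
  intro v hv
  by_contra hvne
  have hvpos : 0 < ‖v‖ := norm_pos_iff.mpr hvne
  -- find n with C * exp(-δ)^n < c
  have hexp1 : Real.exp (-δ) < 1 := Real.exp_lt_one_iff.mpr (neg_lt_zero.mpr hδ)
  have htend : Filter.Tendsto (fun n : ℕ => C * Real.exp (-δ) ^ n) Filter.atTop (𝓝 0) := by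
    have := (tendsto_pow_atTop_nhds_zero_of_lt_one (Real.exp_nonneg _) hexp1).const_mul C
    simpa using this
  obtain ⟨n, hn⟩ := (htend.eventually_lt_const hc).exists
  -- the word
  set w : List (Fin N) := ((List.range n).reverse).map i with hw
  have hPdef : prodRev A i n = listProd A w := rfl
  have hα : 0 < alpha1 (listProd A w) := alpha1_pos (det_listProd_ne_zero hA w)
  have h1 : c * alpha1 (listProd A w) * ‖v‖ ≤ ‖toE2 ((listProd A w).mulVec v)‖ :=
    hlow x hx w v hv.1
  have h2 : ‖toE2 ((listProd A w).mulVec v)‖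
      ≤ C * Real.exp (-δ * n) * alpha1 (listProd A w) * ‖v‖ := by
    have := hcontr i n v hv.2
    rwa [hPdef] at this
  have hexp : Real.exp (-δ * n) = Real.exp (-δ) ^ n := by
    rw [← Real.exp_nat_mul]
    ring_nf
  have h3 : c * (alpha1 (listProd A w) * ‖v‖)
      ≤ (C * Real.exp (-δ) ^ n) * (alpha1 (listProd A w) * ‖v‖) := by
    calc c * (alpha1 (listProd A w) * ‖v‖) = c * alpha1 (listProd A w) * ‖v‖ := by ring
      _ ≤ ‖toE2 ((listProd A w).mulVec v)‖ := h1
      _ ≤ C * Real.exp (-δ * n) * alpha1 (listProd A w) * ‖v‖ := h2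
      _ = (C * Real.exp (-δ) ^ n) * (alpha1 (listProd A w) * ‖v‖) := by rw [hexp]; ring
  have h4 : c ≤ C * Real.exp (-δ) ^ n :=
    le_of_mul_le_mul_right h3 (mul_pos hα hvpos)
  linarith

lemma normOnLine_exists_unit {ℓ : Submodule ℝ E2} (hℓ : Module.finrank ℝ ℓ = 1)
    (B : Matrix (Fin 2) (Fin 2) ℝ) :
    ∃ u : E2, u ∈ ℓ ∧ ‖u‖ = 1 ∧ normOnLine B ℓ = ‖toE2 (B.mulVec u)‖ ∧
      ∀ v ∈ ℓ, ‖toE2 (B.mulVec v)‖ = normOnLine B ℓ * ‖v‖ := by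
  have hbot : ℓ ≠ ⊥ := by
    intro hb
    rw [hb, finrank_bot] at hℓ
    omega
  obtain ⟨u0, hu0, hu0ne⟩ := (Submodule.ne_bot_iff ℓ).mp hbot
  set u : E2 := ‖u0‖⁻¹ • u0 with hu_def
  have hu : u ∈ ℓ := ℓ.smul_mem _ hu0
  have hnu : ‖u‖ = 1 := norm_smul_inv_norm hu0ne
  have hune : u ≠ 0 := by
    intro h
    rw [h, norm_zero] at hnu
    exact one_ne_zero hnu.symm
  have hspan : Submodule.span ℝ {u} = ℓ := by
    apply Submodule.eq_of_le_of_finrank_eq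
    · rw [Submodule.span_singleton_le_iff_mem]; exact hu
    · rw [finrank_span_singleton hune, hℓ]
  have hmem : ∀ v ∈ ℓ, ∃ c : ℝ, v = c • u := by
    intro v hv
    rw [← hspan] at hv
    obtain ⟨c, hc⟩ := Submodule.mem_span_singleton.mp hv
    exact ⟨c, hc.symm⟩
  have hsmul : ∀ (c : ℝ), toE2 (B.mulVec (c • u : E2)) = c • toE2 (B.mulVec u) := by
    intro c
    rw [← Lm_apply, ← Lm_apply, _root_.map_smul]
  have hS : {r : ℝ | ∃ v ∈ ℓ, ‖v‖ = 1 ∧ r = ‖toE2 (B.mulVec v)‖} = {‖toE2 (B.mulVec u)‖} := by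
    ext r
    simp only [Set.mem_setOf_eq, Set.mem_singleton_iff]
    constructor
    · rintro ⟨v, hv, hnv, rfl⟩
      obtain ⟨c, rfl⟩ := hmem v hv
      rw [hsmul, norm_smul]
      rw [norm_smul, hnu, mul_one] at hnv
      rw [hnv, one_mul]
    · rintro rfl
      exact ⟨u, hu, hnu, rfl⟩
  have hval : normOnLine B ℓ = ‖toE2 (B.mulVec u)‖ := by
    rw [normOnLine, hS, csSup_singleton]
  refine ⟨u, hu, hnu, hval, ?_⟩
  intro v hv
  obtain ⟨c, rfl⟩ := hmem v hv
  rw [hsmul, norm_smul, norm_smul, hnu, mul_one, hval]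
  ring

lemma transBall_eq {N : ℕ} {Λ : Set E2} {ess : (ℕ → Fin N) → Submodule ℝ E2}
    {es : E2 → Submodule ℝ E2} {x : E2} {i : ℕ → Fin N}
    (h : IsCompl (es x) (ess i)) (δ : ℝ) :
    transBall Λ ess es δ x i = Λ ∩ {z | ‖projL h x - projL h z‖ ≤ δ} := by
  ext z
  simp only [transBall, Set.mem_setOf_eq, Set.mem_inter_iff]
  constructor
  · rintro ⟨hz, w1, w2, hw1, hw2, hw1x, hw2z, hd⟩
    refine ⟨hz, ?_⟩
    have e1 : w1 = projL h x := projL_unique h hw1 (by simpa using Submodule.neg_mem _ hw1x)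
    have e2 : w2 = projL h z := projL_unique h hw2 (by simpa using Submodule.neg_mem _ hw2z)
    rw [← e1, ← e2]
    exact hd
  · rintro ⟨hz, hd⟩
    refine ⟨hz, projL h x, projL h z, projL_mem h x, projL_mem h z, ?_, ?_, hd⟩
    · simpa using Submodule.neg_mem _ (sub_projL_mem h x)
    · simpa using Submodule.neg_mem _ (sub_projL_mem h z)

end Part4

section Part5
variable {N : ℕ} {A : Fin N → Matrix (Fin 2) (Fin 2) ℝ} {t : Fin N → E2} {a : ℝ}

lemma affIFS_sub (k : Fin N) (y z : E2) :
    affIFS A t k y - affIFS A t k z = Lm (A k) (y - z) := by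
  show (Lm (A k) y + t k) - (Lm (A k) z + t k) = Lm (A k) (y - z)
  rw [map_sub]
  abel

lemma attractor_subset_invariant (ha : ∀ k, alpha1 (A k) ≤ a) (ha0 : 0 ≤ a) (ha1 : a < 1)
    {Λ : Set E2} (hΛ : IsAttractor (affIFS A t) Λ) {K : Set E2} (hK : IsClosed K)
    (hKne : K.Nonempty) (hinv : ∀ k, ∀ z ∈ K, affIFS A t k z ∈ K) : Λ ⊆ K := by
  obtain ⟨hcomp, hne, hun⟩ := hΛ
  have hcont : Continuous fun z : E2 => Metric.infDist z K := Metric.continuous_infDist_pt K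
  obtain ⟨x0, hx0, hmax⟩ := hcomp.exists_isMaxOn hne hcont.continuousOn
  set D := Metric.infDist x0 K with hD
  have hx0' : x0 ∈ ⋃ k, affIFS A t k '' Λ := by rw [← hun]; exact hx0
  obtain ⟨k0, hk0⟩ := Set.mem_iUnion.mp hx0'
  obtain ⟨y, hy, hfy⟩ := hk0
  have hstep : ∀ ε > (0:ℝ), D ≤ a * Metric.infDist y K + a * ε := by
    intro ε hε
    have h1 : Metric.infDist y K < Metric.infDist y K + ε := lt_add_of_pos_right _ hε
    obtain ⟨z, hz, hdz⟩ := (Metric.infDist_lt_iff hKne).mp h1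
    have h2 : Metric.infDist x0 K ≤ dist x0 (affIFS A t k0 z) :=
      Metric.infDist_le_dist_of_mem (hinv k0 z hz)
    have h3 : dist x0 (affIFS A t k0 z) ≤ a * dist y z := by
      rw [← hfy, dist_eq_norm, affIFS_sub]
      calc ‖Lm (A k0) (y - z)‖ ≤ alpha1 (A k0) * ‖y - z‖ := (Lm (A k0)).le_opNorm _
        _ ≤ a * ‖y - z‖ := mul_le_mul_of_nonneg_right (ha k0) (norm_nonneg _)
        _ = a * dist y z := by rw [dist_eq_norm]
    calc D ≤ a * dist y z := le_trans h2 h3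
      _ ≤ a * (Metric.infDist y K + ε) := mul_le_mul_of_nonneg_left hdz.le ha0
      _ = a * Metric.infDist y K + a * ε := by ring
  have hself : D ≤ a * D := by
    have hyD : Metric.infDist y K ≤ D := hmax hy
    have : ∀ ε > (0:ℝ), D ≤ a * D + ε := by
      intro ε hε
      by_cases haz : a = 0
      · have := hstep ε hε
        rw [haz] at this ⊢
        simpa using (this.trans (by linarith))
      · have hapos : 0 < a := lt_of_le_of_ne ha0 (Ne.symm haz)
        have := hstep (ε / a) (div_pos hε hapos)
        calc D ≤ a * Metric.infDist y K + a * (ε / a) := this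
          _ ≤ a * D + a * (ε / a) := by
              have := mul_le_mul_of_nonneg_left hyD ha0
              linarith
          _ = a * D + ε := by rw [mul_div_cancel₀ _ (ne_of_gt hapos)]
    exact le_of_forall_pos_le_add this
  have hD0 : D ≤ 0 := by nlinarith
  intro z hz
  have h1 : Metric.infDist z K ≤ D := hmax hz
  have h2 : 0 ≤ Metric.infDist z K := Metric.infDist_nonneg
  have h3 : Metric.infDist z K = 0 := le_antisymm (h1.trans hD0) h2
  have := (Metric.mem_closure_iff_infDist_zero hKne).mpr h3
  rwa [hK.closure_eq] at this

end Part5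


/-- **Lemma.** Under dominated splitting and strong separation, for every `x ∈ Λ`,
`i ∈ Σ⁺` and `δ > 0`, writing `j` for the unique symbol with `x ∈ f_j(Λ)` and
`x' = f_j⁻¹(x)`, one has
`μ(B^T_δ(x,i) ∩ f_j(Λ)) = p_j · μ(B^T_{δ/‖A_j|e_s(x')‖}(x', ji))`. -/
theorem statement8
    {N : ℕ} (A : Fin N → Matrix (Fin 2) (Fin 2) ℝ)
    (hA : ∀ i, alpha1 (A i) < 1 ∧ (A i).det ≠ 0)
    (t : Fin N → E2) (Λ : Set E2) (hΛ : IsAttractor (affIFS A t) Λ)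
    (p : Fin N → ℝ) (hp : ∀ i, 0 < p i) (hp1 : ∑ i, p i = 1)
    (ν : Measure (ℕ → Fin N)) (hνP : IsProbabilityMeasure ν) (hber : IsBernoulli p ν)
    (μ : Measure E2) (hμ : μ = ν.map (piPlus A t))
    (ess : (ℕ → Fin N) → Submodule ℝ E2) (hess : IsStrongStableDirections A ess)
    (es : E2 → Submodule ℝ E2) (hes : IsStableDirections A (affIFS A t) Λ es)
    (hds : DominatedSplitting A) (hssc : SSC (affIFS A t)) :
    ∀ x ∈ Λ, ∀ (i : ℕ → Fin N), ∀ δ > (0:ℝ), ∀ (j : Fin N), ∀ x' ∈ Λ,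
      x = affIFS A t j x' →
      μ (transBall Λ ess es δ x i ∩ (affIFS A t j '' Λ)) =
        ENNReal.ofReal (p j) *
          μ (transBall Λ ess es (δ / normOnLine (A j) (es x')) x' (consW j i)) := by
  intro x hx i δ hδ j x' hx' hxe
  classical
  have hdet : ∀ k, (A k).det ≠ 0 := fun k => (hA k).2
  haveI : Nonempty (Fin N) := ⟨j⟩
  obtain ⟨a, ha, ha0, ha1⟩ : ∃ a : ℝ, (∀ k, alpha1 (A k) ≤ a) ∧ 0 ≤ a ∧ a < 1 := by
    refine ⟨Finset.univ.sup' Finset.univ_nonempty (fun k => alpha1 (A k)),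
      fun k => Finset.le_sup' (f := fun k => alpha1 (A k)) (Finset.mem_univ k),
      le_trans (alpha1_nonneg (A j))
        (Finset.le_sup' (f := fun k => alpha1 (A k)) (Finset.mem_univ j)), ?_⟩
    exact (Finset.sup'_lt_iff _).mpr fun k _ => (hA k).1
  obtain ⟨Tb, htb⟩ : ∃ Tb : ℝ, ∀ k, ‖t k‖ ≤ Tb :=
    ⟨Finset.univ.sup' Finset.univ_nonempty (fun k => ‖t k‖),
      fun k => Finset.le_sup' (f := fun k => ‖t k‖) (Finset.mem_univ k)⟩
  -- attractor facts
  obtain ⟨hcomp, hne, hun⟩ := hΛ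
  obtain ⟨y0, hy0⟩ := hne
  have hfΛ : ∀ k, ∀ z ∈ Λ, affIFS A t k z ∈ Λ := by
    intro k z hz
    rw [hun]
    exact Set.mem_iUnion.mpr ⟨k, Set.mem_image_of_mem _ hz⟩
  have hclosed : IsClosed Λ := hcomp.isClosed
  -- SSC facts
  obtain ⟨O, hOopen, hOne, hObd, hOmap, hOdisj⟩ := hssc
  have hinvO : ∀ k, ∀ z ∈ closure O, affIFS A t k z ∈ closure O :=
    fun k z hz => subset_closure (hOmap k (Set.mem_image_of_mem _ hz))
  have hΛO : Λ ⊆ closure O :=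
    attractor_subset_invariant ha ha0 ha1 ⟨hcomp, ⟨y0, hy0⟩, hun⟩
      isClosed_closure (hOne.mono subset_closure) hinvO
  -- piPlus facts
  have hπΛ : ∀ w, piPlus A t w ∈ Λ :=
    fun w => piPlus_mem_of_closed ha ha0 ha1 htb hclosed hy0 hfΛ w
  have hπshift : ∀ w : ℕ → Fin N, piPlus A t w = affIFS A t (w 0) (piPlus A t (shift w)) :=
    piPlus_shift ha ha0 ha1 htb
  have hπmeas := piPlus_measurable (t := t) ha ha0 ha1 htb
  -- injectivity
  have hLm_inj : ∀ k, Function.Injective (Lm (A k)) := by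
    intro k u v huv
    by_contra hne'
    apply mulVec_ne_zero (hdet k) (sub_ne_zero.mpr (fun h : (u : Fin 2 → ℝ) = v => hne' (congrArg (WithLp.toLp 2) h)))
    have h2 : Lm (A k) (u - v) = 0 := by rw [map_sub, huv, sub_self]
    simpa [Lm_apply, toE2] using congrArg WithLp.ofLp h2
  have hfinj : ∀ k, Function.Injective (affIFS A t k) := by
    intro k u v huv
    apply hLm_inj k
    have : Lm (A k) u + t k = Lm (A k) v + t k := huv
    exact add_right_cancel this
  -- transversality and projections
  have hcx : IsCompl (es x) (ess i) := es_ess_transversal hdet hess hes hx i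
  have hcx' : IsCompl (es x') (ess (consW j i)) :=
    es_ess_transversal hdet hess hes hx' (consW j i)
  -- normOnLine
  obtain ⟨u, huℓ, hu1, hnval, hnform⟩ := normOnLine_exists_unit (hes.1 x' hx') (A j)
  set n0 : ℝ := normOnLine (A j) (es x') with hn0_def
  have hune : u ≠ 0 := fun h => by rw [h, norm_zero] at hu1; exact one_ne_zero hu1.symm
  have hn0 : 0 < n0 := by
    rw [hnval]
    exact norm_pos_iff.mpr (fun h => mulVec_ne_zero (hdet j) (v := (u : Fin 2 → ℝ)) (fun h' => hune (by simpa using congrArg (WithLp.toLp 2) h')) (by simpa [toE2] using congrArg WithLp.ofLp h))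
  -- equivariance
  have hmapes : Submodule.map (Matrix.toEuclideanLin (A j)) (es x') = es x := by
    rw [hes.2.1 j x' hx', ← hxe]
  have hmapess : Submodule.map (Matrix.toEuclideanLin (A j)) (ess (consW j i)) = ess i := by
    have h2 := hess.2.1 (consW j i)
    rw [shift_consW] at h2
    exact h2
  have hAes : ∀ v ∈ es x', Lm (A j) v ∈ es x := by
    intro v hv
    rw [← hmapes]
    exact Submodule.mem_map_of_mem hv
  have hAess : ∀ v ∈ ess (consW j i), Lm (A j) v ∈ ess i := by
    intro v hv
    rw [← hmapess]
    exact Submodule.mem_map_of_mem hv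
  -- key projection formula
  have hFf : ∀ u' : E2, projL hcx (affIFS A t j u')
      = Lm (A j) (projL hcx' u') + projL hcx (t j) := by
    intro u'
    refine (projL_unique hcx ?_ ?_).symm
    · exact Submodule.add_mem _ (hAes _ (projL_mem hcx' u')) (projL_mem hcx (t j))
    · have heq : affIFS A t j u' - (Lm (A j) (projL hcx' u') + projL hcx (t j))
          = Lm (A j) (u' - projL hcx' u') + (t j - projL hcx (t j)) := by
        show Lm (A j) u' + t j - _ = _
        rw [map_sub]
        abel
      rw [heq]
      exact Submodule.add_mem _ (hAess _ (sub_projL_mem hcx' u')) (sub_projL_mem hcx (t j))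
  have hkey : ∀ z' : E2, projL hcx x - projL hcx (affIFS A t j z')
      = Lm (A j) (projL hcx' x' - projL hcx' z') := by
    intro z'
    have h0 : projL hcx x = Lm (A j) (projL hcx' x') + projL hcx (t j) := by
      rw [congrArg (projL hcx) hxe]
      exact hFf x'
    rw [h0, hFf z', map_sub]
    abel
  have hnormkey : ∀ z' : E2, ‖projL hcx x - projL hcx (affIFS A t j z')‖
      = n0 * ‖projL hcx' x' - projL hcx' z'‖ := by
    intro z'
    rw [hkey z', Lm_apply]
    exact hnform _ (Submodule.sub_mem _ (projL_mem hcx' x') (projL_mem hcx' z'))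
  -- the two transversal balls
  set T' : Set E2 := transBall Λ ess es (δ / n0) x' (consW j i) with hT'_def
  have hT'eq : T' = Λ ∩ {z | ‖projL hcx' x' - projL hcx' z‖ ≤ δ / n0} :=
    transBall_eq hcx' (δ / n0)
  have hTeq : transBall Λ ess es δ x i = Λ ∩ {z | ‖projL hcx x - projL hcx z‖ ≤ δ} :=
    transBall_eq hcx δ
  -- set identity 1
  have hset1 : transBall Λ ess es δ x i ∩ (affIFS A t j '' Λ) = affIFS A t j '' T' := by
    rw [hTeq, hT'eq]
    ext z
    constructor
    · rintro ⟨⟨hzΛ, hzd⟩, z', hz'Λ, rfl⟩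
      refine ⟨z', ⟨hz'Λ, ?_⟩, rfl⟩
      simp only [Set.mem_setOf_eq] at hzd
      rw [hnormkey z'] at hzd
      rw [Set.mem_setOf_eq, le_div_iff₀ hn0, mul_comm]
      exact hzd
    · rintro ⟨z', ⟨hz'Λ, hd'⟩, rfl⟩
      refine ⟨⟨hfΛ j z' hz'Λ, ?_⟩, ⟨z', hz'Λ, rfl⟩⟩
      rw [Set.mem_setOf_eq, hnormkey z']
      calc n0 * ‖projL hcx' x' - projL hcx' z'‖ ≤ n0 * (δ / n0) :=
            mul_le_mul_of_nonneg_left hd' hn0.le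
        _ = δ := mul_div_cancel₀ δ hn0.ne'
  -- measurability
  have hT'meas : MeasurableSet T' := by
    rw [hT'eq]
    refine hclosed.measurableSet.inter ?_
    have : IsClosed {z : E2 | ‖projL hcx' x' - projL hcx' z‖ ≤ δ / n0} :=
      isClosed_le (Continuous.norm (continuous_const.sub (projL_continuous hcx')))
        continuous_const
    exact this.measurableSet
  set g : E2 → E2 := fun z => Lm (A j)⁻¹ (z - t j) with hg_def
  have hgf : ∀ u' : E2, g (affIFS A t j u') = u' := by
    intro u'
    show Lm (A j)⁻¹ ((Lm (A j) u' + t j) - t j) = u'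
    rw [add_sub_cancel_right]
    have : Lm (A j)⁻¹ (Lm (A j) u') = Lm ((A j)⁻¹ * A j) u' := by
      rw [Lm_mul]; rfl
    rw [this, Matrix.nonsing_inv_mul _ (Ne.isUnit (hdet j)), Lm_one]
    rfl
  have hfg : ∀ z : E2, affIFS A t j (g z) = z := by
    intro z
    show Lm (A j) (Lm (A j)⁻¹ (z - t j)) + t j = z
    have : Lm (A j) (Lm (A j)⁻¹ (z - t j)) = Lm (A j * (A j)⁻¹) (z - t j) := by
      rw [Lm_mul]; rfl
    rw [this, Matrix.mul_nonsing_inv _ (Ne.isUnit (hdet j)), Lm_one]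
    show z - t j + t j = z
    abel
  have himg : affIFS A t j '' T' = g ⁻¹' T' := by
    ext z
    constructor
    · rintro ⟨z', hz', rfl⟩
      show g (affIFS A t j z') ∈ T'
      rw [hgf]
      exact hz'
    · intro hz
      exact ⟨g z, hz, hfg z⟩
  have hgcont : Continuous g := (Lm (A j)⁻¹).continuous.comp (continuous_id.sub continuous_const)
  have hfT'meas : MeasurableSet (affIFS A t j '' T') := by
    rw [himg]
    exact hgcont.measurable hT'meas
  -- set identity 2
  have hT'sub : T' ⊆ Λ := fun z hz => hz.1
  have hset2 : piPlus A t ⁻¹' (affIFS A t j '' T')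
      = shift ⁻¹' (piPlus A t ⁻¹' T') ∩ {w | w 0 = j} := by
    ext w
    simp only [Set.mem_preimage, Set.mem_inter_iff, Set.mem_setOf_eq]
    constructor
    · rintro ⟨q, hq, hqe⟩
      have hw0 : w 0 = j := by
        by_contra hne'
        have hdisj := hOdisj hne'
        apply Set.disjoint_left.mp hdisj
        · show piPlus A t w ∈ affIFS A t (w 0) '' closure O
          rw [hπshift w]
          exact Set.mem_image_of_mem _ (hΛO (hπΛ (shift w)))
        · rw [← hqe]
          exact Set.mem_image_of_mem _ (hΛO (hT'sub hq))
      refine ⟨?_, hw0⟩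
      have hqe' : affIFS A t j q = affIFS A t j (piPlus A t (shift w)) := by
        rw [hqe, hπshift w, hw0]
      have hq2 : q = piPlus A t (shift w) := hfinj j hqe'
      show piPlus A t (shift w) ∈ T'
      rw [← hq2]
      exact hq
    · rintro ⟨hsh, hw0⟩
      refine ⟨piPlus A t (shift w), hsh, ?_⟩
      rw [← hw0, ← hπshift w]
  -- final computation
  rw [hμ, hset1, Measure.map_apply hπmeas hfT'meas, hset2,
    bernoulli_shift hνP hber j (hπmeas hT'meas),
    Measure.map_apply hπmeas hT'meas]

end
end

section
/- Suppose each A_i is lower triangular, A_i = [[a_i, 0],[b_i, c_i]] with 0 < |a_i|, |c_i| < 1. If either |a_i| > |c_i| for every i = 1,…,N, or |a_i| < |c_i| for every i = 1,…,N, then 𝒜 = {A_1,…,A_N} satisfies the dominated splitting condition. -/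
open MeasureTheory Filter Metric Set
open scoped ENNReal Topology NNReal

noncomputable section

lemma coord_le_norm' (v : E2) (k : Fin 2) : |v k| ≤ ‖v‖ := by
  rw [EuclideanSpace.norm_eq, ← Real.sqrt_sq_eq_abs]
  apply Real.sqrt_le_sqrt
  have := Finset.single_le_sum (f := fun i => ‖v i‖ ^ 2)
    (fun i _ => by positivity) (Finset.mem_univ k)
  simpa [Real.norm_eq_abs, sq_abs] using this

lemma diag_le_alpha1' (B : Matrix (Fin 2) (Fin 2) ℝ) (k : Fin 2) : |B k k| ≤ alpha1 B := by
  set L := LinearMap.toContinuousLinearMap (Matrix.toEuclideanLin B)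
  have hv : ‖(EuclideanSpace.single k (1:ℝ))‖ = 1 := by
    simp [EuclideanSpace.norm_single]
  have h1 : ‖L (EuclideanSpace.single k 1)‖ ≤ alpha1 B := by
    simpa [hv, alpha1] using L.le_opNorm (EuclideanSpace.single k 1)
  refine le_trans ?_ h1
  have h2 : (L (EuclideanSpace.single k 1)) k = B k k := by
    show (Matrix.toEuclideanLin B (EuclideanSpace.single k 1)) k = B k k
    have : (EuclideanSpace.single k (1:ℝ)).ofLp = Pi.single k 1 := rfl
    rw [Matrix.toEuclideanLin_apply, this]
    show (Matrix.mulVec B (Pi.single k 1)) k = B k k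
    rw [Matrix.mulVec_single]
    simp
  calc |B k k| = |(L (EuclideanSpace.single k 1)) k| := by rw [h2]
    _ ≤ _ := coord_le_norm' _ k

lemma ratio_ge' (B : Matrix (Fin 2) (Fin 2) ℝ) (Pa Pc t : ℝ) (hPa : 0 < Pa) (hPc : 0 < Pc)
    (h1 : Pa ≤ alpha1 B) (hdet : |B.det| = Pa * Pc) (hle : Pc * t ≤ Pa) :
    t ≤ alpha1 B / alpha2 B := by
  have hα : 0 < alpha1 B := lt_of_lt_of_le hPa h1
  rw [alpha2, hdet, div_div_eq_mul_div, le_div_iff₀ (by positivity)]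
  nlinarith [mul_le_mul h1 h1 hPa.le hα.le, mul_le_mul_of_nonneg_left hle hPa.le]

lemma abs_list_prod' (l : List ℝ) : |l.prod| = (l.map abs).prod := by
  induction l with
  | nil => simp
  | cons x l ih => simp [abs_mul, ih]

lemma listProd_entries' {N : ℕ} (a b c : Fin N → ℝ) (A : Fin N → Matrix (Fin 2) (Fin 2) ℝ)
    (hAdef : ∀ i, A i = !![a i, 0; b i, c i]) (w : List (Fin N)) :
    (listProd A w) 0 0 = (w.map a).prod ∧ (listProd A w) 0 1 = 0 ∧
      (listProd A w) 1 1 = (w.map c).prod := by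
  induction w with
  | nil => simp [listProd, Matrix.one_apply]
  | cons i w ih =>
    have hstep : listProd A (i :: w) = A i * listProd A w := by simp [listProd]
    obtain ⟨h00, h01, h11⟩ := ih
    refine ⟨?_, ?_, ?_⟩ <;>
      simp [hstep, hAdef i, Matrix.mul_apply, Fin.sum_univ_two, h00, h01, h11]

lemma prod_le_pow' {N : ℕ} (u v : Fin N → ℝ) (r : ℝ) (hu : ∀ i, 0 < u i)
    (hv : ∀ i, 0 ≤ v i) (hr : ∀ i, v i ≤ r * u i) (hr0 : 0 ≤ r) (w : List (Fin N)) :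
    (w.map fun i => v i).prod ≤ r ^ w.length * (w.map fun i => u i).prod := by
  induction w with
  | nil => simp
  | cons i w ih =>
    have hupos : 0 < (w.map fun i => u i).prod := by
      apply List.prod_pos
      intro x hx
      simp only [List.mem_map] at hx
      obtain ⟨j, _, rfl⟩ := hx
      exact hu j
    have hvnn : 0 ≤ (w.map fun i => v i).prod := by
      apply List.prod_nonneg
      intro x hx
      simp only [List.mem_map] at hx
      obtain ⟨j, _, rfl⟩ := hx
      exact hv j
    simp only [List.map_cons, List.prod_cons, List.length_cons, pow_succ]
    calc v i * (w.map fun i => v i).prod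
        ≤ (r * u i) * (r ^ w.length * (w.map fun i => u i).prod) :=
          mul_le_mul (hr i) ih hvnn (by nlinarith [hu i])
      _ = r ^ w.length * r * (u i * (w.map fun i => u i).prod) := by ring

lemma dominated_of_ratio' {N : ℕ} (a b c : Fin N → ℝ)
    (ha : ∀ i, 0 < |a i|) (hc : ∀ i, 0 < |c i|)
    (A : Fin N → Matrix (Fin 2) (Fin 2) ℝ)
    (hAdef : ∀ i, A i = !![a i, 0; b i, c i])
    (r : ℝ) (hr0 : 0 < r) (hr1 : r < 1) (hrc : ∀ i, |c i| ≤ r * |a i|) :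
    DominatedSplitting A := by
  have hlog : Real.log r < 0 := Real.log_neg hr0 hr1
  refine ⟨1, one_pos, -Real.log r, by linarith, fun w => ?_⟩
  set B := listProd A w with hB
  obtain ⟨h00, h01, h11⟩ := listProd_entries' a b c A hAdef w
  set Pa := (w.map fun i => |a i|).prod with hPadef
  set Pc := (w.map fun i => |c i|).prod with hPcdef
  have hPa : 0 < Pa := by
    apply List.prod_pos
    intro x hx
    simp only [List.mem_map] at hx
    obtain ⟨j, _, rfl⟩ := hx
    exact ha j
  have hPc : 0 < Pc := by
    apply List.prod_pos
    intro x hx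
    simp only [List.mem_map] at hx
    obtain ⟨j, _, rfl⟩ := hx
    exact hc j
  have habs00 : |B 0 0| = Pa := by
    rw [hB, h00, abs_list_prod', List.map_map]
    rfl
  have habs11 : |B 1 1| = Pc := by
    rw [hB, h11, abs_list_prod', List.map_map]
    rfl
  have hdet : |B.det| = Pa * Pc := by
    rw [hB, Matrix.det_fin_two, h01, ← hB]
    simp only [zero_mul, sub_zero, abs_mul, habs00, habs11]
  have h1 : Pa ≤ alpha1 B := habs00 ▸ diag_le_alpha1' B 0
  have hexp : Real.exp (-Real.log r * (w.length : ℝ)) = (r ^ w.length)⁻¹ := by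
    rw [mul_comm, Real.exp_nat_mul, Real.exp_neg, Real.exp_log hr0, inv_pow]
  have hprodle : Pc ≤ r ^ w.length * Pa :=
    prod_le_pow' (fun i => |a i|) (fun i => |c i|) r ha (fun i => abs_nonneg _) hrc hr0.le w
  have hle : Pc * Real.exp (-Real.log r * (w.length : ℝ)) ≤ Pa := by
    rw [hexp, ← div_eq_mul_inv, div_le_iff₀ (by positivity)]
    linarith [hprodle]
  have := ratio_ge' B Pa Pc (Real.exp (-Real.log r * (w.length : ℝ))) hPa hPc h1 hdet hle
  simpa using this


lemma dominated_of_ratio_swap' {N : ℕ} (a b c : Fin N → ℝ)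
    (ha : ∀ i, 0 < |a i|) (hc : ∀ i, 0 < |c i|)
    (A : Fin N → Matrix (Fin 2) (Fin 2) ℝ)
    (hAdef : ∀ i, A i = !![a i, 0; b i, c i])
    (r : ℝ) (hr0 : 0 < r) (hr1 : r < 1) (hrc : ∀ i, |a i| ≤ r * |c i|) :
    DominatedSplitting A := by
  have hlog : Real.log r < 0 := Real.log_neg hr0 hr1
  refine ⟨1, one_pos, -Real.log r, by linarith, fun w => ?_⟩
  set B := listProd A w with hB
  obtain ⟨h00, h01, h11⟩ := listProd_entries' a b c A hAdef w
  set Pa := (w.map fun i => |a i|).prod with hPadef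
  set Pc := (w.map fun i => |c i|).prod with hPcdef
  have hPa : 0 < Pa := by
    apply List.prod_pos
    intro x hx
    simp only [List.mem_map] at hx
    obtain ⟨j, _, rfl⟩ := hx
    exact ha j
  have hPc : 0 < Pc := by
    apply List.prod_pos
    intro x hx
    simp only [List.mem_map] at hx
    obtain ⟨j, _, rfl⟩ := hx
    exact hc j
  have habs00 : |B 0 0| = Pa := by
    rw [hB, h00, abs_list_prod', List.map_map]
    rfl
  have habs11 : |B 1 1| = Pc := by
    rw [hB, h11, abs_list_prod', List.map_map]
    rfl
  have hdet : |B.det| = Pc * Pa := by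
    rw [hB, Matrix.det_fin_two, h01, ← hB]
    simp only [zero_mul, sub_zero, abs_mul, habs00, habs11]
    ring
  have h1 : Pc ≤ alpha1 B := habs11 ▸ diag_le_alpha1' B 1
  have hexp : Real.exp (-Real.log r * (w.length : ℝ)) = (r ^ w.length)⁻¹ := by
    rw [mul_comm, Real.exp_nat_mul, Real.exp_neg, Real.exp_log hr0, inv_pow]
  have hprodle : Pa ≤ r ^ w.length * Pc :=
    prod_le_pow' (fun i => |c i|) (fun i => |a i|) r hc (fun i => abs_nonneg _) hrc hr0.le w
  have hle : Pa * Real.exp (-Real.log r * (w.length : ℝ)) ≤ Pc := by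
    rw [hexp, ← div_eq_mul_inv, div_le_iff₀ (by positivity)]
    linarith [hprodle]
  have := ratio_ge' B Pc Pa (Real.exp (-Real.log r * (w.length : ℝ))) hPc hPa h1 hdet hle
  simpa using this

/-- **Lemma.** A family of contracting, non-singular lower triangular matrices
`A_i = [[a_i, 0], [b_i, c_i]]` satisfies the dominated splitting condition if either
`|a_i| > |c_i|` for every `i`, or `|a_i| < |c_i|` for every `i`. -/
theorem statement13
    {N : ℕ} (a b c : Fin N → ℝ)
    (ha : ∀ i, 0 < |a i| ∧ |a i| < 1) (hc : ∀ i, 0 < |c i| ∧ |c i| < 1)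
    (A : Fin N → Matrix (Fin 2) (Fin 2) ℝ)
    (hAdef : ∀ i, A i = !![a i, 0; b i, c i])
    (hcontr : ∀ i, alpha1 (A i) < 1)
    (h : (∀ i, |c i| < |a i|) ∨ (∀ i, |a i| < |c i|)) :
    DominatedSplitting A := by
  rcases Nat.eq_zero_or_pos N with hN | hN
  · subst hN
    exact dominated_of_ratio' a b c (fun i => (ha i).1) (fun i => (hc i).1) A hAdef
      (1/2) (by norm_num) (by norm_num) (fun i => i.elim0)
  have hne : (Finset.univ : Finset (Fin N)).Nonempty := ⟨⟨0, hN⟩, Finset.mem_univ _⟩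
  rcases h with h | h
  · set r := Finset.univ.sup' hne (fun i => |c i| / |a i|) with hr
    have hr0 : 0 < r := by
      have := Finset.le_sup' (fun i => |c i| / |a i|) (Finset.mem_univ ⟨0, hN⟩)
      have hpos : 0 < |c ⟨0, hN⟩| / |a ⟨0, hN⟩| := div_pos (hc _).1 (ha _).1
      linarith
    have hr1 : r < 1 := by
      rw [hr, Finset.sup'_lt_iff]
      intro i _
      rw [div_lt_one (ha i).1]
      exact h i
    have hrc : ∀ i, |c i| ≤ r * |a i| := by
      intro i
      have := Finset.le_sup' (fun i => |c i| / |a i|) (Finset.mem_univ i)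
      rw [div_le_iff₀ (ha i).1] at this
      linarith [this]
    exact dominated_of_ratio' a b c (fun i => (ha i).1) (fun i => (hc i).1) A hAdef
      r hr0 hr1 hrc
  · set r := Finset.univ.sup' hne (fun i => |a i| / |c i|) with hr
    have hr0 : 0 < r := by
      have := Finset.le_sup' (fun i => |a i| / |c i|) (Finset.mem_univ ⟨0, hN⟩)
      have hpos : 0 < |a ⟨0, hN⟩| / |c ⟨0, hN⟩| := div_pos (ha _).1 (hc _).1
      linarith
    have hr1 : r < 1 := by
      rw [hr, Finset.sup'_lt_iff]
      intro i _
      rw [div_lt_one (hc i).1]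
      exact h i
    have hrc : ∀ i, |a i| ≤ r * |c i| := by
      intro i
      have := Finset.le_sup' (fun i => |a i| / |c i|) (Finset.mem_univ i)
      rw [div_le_iff₀ (hc i).1] at this
      linarith [this]
    exact dominated_of_ratio_swap' a b c (fun i => (ha i).1) (fun i => (hc i).1) A hAdef
      r hr0 hr1 hrc

end
end
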